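/- Let $V$ and $V_R$ (for $R \in \mathbb{R}_{>0}$) be real vector spaces equipped with quadratic forms $Q$ and $Q_R$ respectively. Suppose $Q$ has finite index $k$ (the maximal dimension of a subspace on which $Q$ is negative definite), and for each $R$ there is a linear map $X \mapsto X_R$ from $V$ to $V_R$ such that $\lim_{R \to \infty} Q_R(X_R) = Q(X)$ for every $X \in V$. Then $\liminf_{R \to \infty} \mathrm{Ind}(Q_R) \geq \mathrm{Ind}(Q)$. -/

import Mathlib

open Filter

lemma assocReal {M : Type*} [AddCommGroup M] [Module ℝ M] (p : QuadraticForm ℝ M) (x y : M) :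
    QuadraticMap.associated (R := ℝ) p x y = (1/2) * (p (x + y) - p x - p y) := by
  have h : (2 • QuadraticMap.associatedHom ℝ p) x y = p.polarBilin x y := by
    rw [QuadraticMap.two_nsmul_associated]
  simp only [LinearMap.smul_apply, smul_eq_mul, QuadraticMap.polarBilin_apply_apply,
    QuadraticMap.polar, nsmul_eq_mul, Nat.cast_ofNat] at h
  linarith

lemma quadExpand {k : ℕ} (p : QuadraticForm ℝ (Fin k → ℝ)) (x : Fin k → ℝ) :
    p x = ∑ i, ∑ j, x i * x j *
      QuadraticMap.associated (R := ℝ) p (Pi.single i 1) (Pi.single j 1) := by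
  set B := QuadraticMap.associated (R := ℝ) p with hB
  have hx : x = ∑ i, x i • (Pi.single i (1:ℝ) : Fin k → ℝ) := by
    conv_lhs => rw [← Finset.univ_sum_single x]
    refine Finset.sum_congr rfl fun i _ => ?_
    ext j
    by_cases h : j = i <;> simp [h, Pi.single_apply]
  calc p x = B x x := (QuadraticMap.associated_eq_self_apply ℝ p x).symm
    _ = _ := by
      conv_lhs => rw [hx]
      simp only [map_sum, LinearMap.sum_apply, LinearMap.map_smul, LinearMap.smul_apply,
        smul_eq_mul]
      rw [Finset.sum_comm]
      refine Finset.sum_congr rfl fun i _ => Finset.sum_congr rfl fun j _ => by ring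

/-- The index of a quadratic form: the supremum of dimensions of (finite-dimensional)
subspaces on which it is negative definite. -/
noncomputable def qIndex {V : Type*} [AddCommGroup V] [Module ℝ V]
    (Q : QuadraticForm ℝ V) : ℕ∞ :=
  ⨆ (n : ℕ) (_ : ∃ W : Submodule ℝ V, FiniteDimensional ℝ W ∧
      Module.finrank ℝ W = n ∧ ∀ x ∈ W, x ≠ 0 → Q x < 0), (n : ℕ∞)

theorem stmt0 {V : Type*} [AddCommGroup V] [Module ℝ V]
    (VR : ℝ → Type*) [∀ R, AddCommGroup (VR R)] [∀ R, Module ℝ (VR R)]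
    (Q : QuadraticForm ℝ V) (QR : ∀ R, QuadraticForm ℝ (VR R))
    (T : ∀ R, V →ₗ[ℝ] VR R)
    (k : ℕ) (hk : qIndex Q = (k : ℕ∞))
    (hconv : ∀ X : V, Tendsto (fun R => QR R (T R X)) atTop (nhds (Q X))) :
    (k : ℕ∞) ≤ Filter.atTop.liminf fun R => qIndex (QR R) := by
  rcases Nat.eq_zero_or_pos k with hk0 | hkpos
  · subst hk0; simp
  -- Step 1: the sup defining qIndex Q is attained: there is a subspace of finrank exactly k
  have hex : ∃ W : Submodule ℝ V, FiniteDimensional ℝ W ∧ Module.finrank ℝ W = k ∧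
      ∀ x ∈ W, x ≠ 0 → Q x < 0 := by
    by_contra hne
    have hle : qIndex Q ≤ ((k - 1 : ℕ) : ℕ∞) := by
      refine iSup₂_le fun n hn => ?_
      have hnk : (n : ℕ∞) ≤ (k : ℕ∞) := by
        rw [← hk]
        exact le_iSup₂ (f := fun (n : ℕ) (_ : ∃ W : Submodule ℝ V, FiniteDimensional ℝ W ∧
          Module.finrank ℝ W = n ∧ ∀ x ∈ W, x ≠ 0 → Q x < 0) => (n : ℕ∞)) n hn
      have hnk' : n ≤ k := by exact_mod_cast hnk
      have hne' : n ≠ k := fun h => hne (h ▸ hn)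
      exact_mod_cast Nat.le_sub_one_of_lt (lt_of_le_of_ne hnk' hne')
    rw [hk] at hle
    have : k ≤ k - 1 := by exact_mod_cast hle
    omega
  obtain ⟨W, hWfin, hWrank, hWneg⟩ := hex
  haveI := hWfin
  let b : Module.Basis (Fin k) ℝ W := Module.finBasisOfFinrankEq ℝ W hWrank
  let L : (Fin k → ℝ) →ₗ[ℝ] V := W.subtype ∘ₗ b.equivFun.symm.toLinearMap
  have hLinj : Function.Injective L := by
    have h : Function.Injective (⇑(W.subtype) ∘ ⇑(b.equivFun.symm.toLinearMap)) :=
      W.injective_subtype.comp b.equivFun.symm.injective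
    simpa [L, LinearMap.coe_comp] using h
  set qinf : QuadraticForm ℝ (Fin k → ℝ) := Q.comp L with hqinfdef
  set q : ℝ → QuadraticForm ℝ (Fin k → ℝ) := fun R => (QR R).comp ((T R) ∘ₗ L) with hqdef
  have hqapp : ∀ R x, q R x = QR R (T R (L x)) := fun R x => rfl
  have hqinfapp : ∀ x, qinf x = Q (L x) := fun x => rfl
  have hneginf : ∀ x : Fin k → ℝ, x ≠ 0 → qinf x < 0 := by
    intro x hx
    refine hWneg _ (b.equivFun.symm x).2 ?_
    intro h0; exact hx (hLinj (by rw [show L x = 0 from h0, map_zero]))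
  have hqconv : ∀ x, Tendsto (fun R => q R x) atTop (nhds (qinf x)) := fun x => hconv (L x)
  set c : ℝ → Fin k → Fin k → ℝ := fun R i j =>
    QuadraticMap.associated (R := ℝ) (q R) (Pi.single i 1) (Pi.single j 1) with hcdef
  set cinf : Fin k → Fin k → ℝ := fun i j =>
    QuadraticMap.associated (R := ℝ) qinf (Pi.single i 1) (Pi.single j 1) with hcinfdef
  have hcconv : ∀ i j, Tendsto (fun R => c R i j) atTop (nhds (cinf i j)) := by
    intro i j
    simp only [hcdef, hcinfdef, assocReal]
    exact (((hqconv _).sub (hqconv _)).sub (hqconv _)).const_mul _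
  have hcont : Continuous fun x => qinf x := by
    have h : (fun x : Fin k → ℝ => qinf x) = fun x => ∑ i, ∑ j, x i * x j * cinf i j :=
      funext fun x => quadExpand qinf x
    rw [h]
    exact continuous_finset_sum _ fun i _ => continuous_finset_sum _ fun j _ =>
      ((continuous_apply i).mul (continuous_apply j)).mul continuous_const
  haveI : Nonempty (Fin k) := ⟨⟨0, hkpos⟩⟩
  obtain ⟨x₀, hx₀mem, hx₀max⟩ := (isCompact_sphere (0 : Fin k → ℝ) 1).exists_isMaxOn
    (NormedSpace.sphere_nonempty.2 zero_le_one) hcont.continuousOn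
  have hx₀norm : ‖x₀‖ = 1 := mem_sphere_zero_iff_norm.mp hx₀mem
  set ε : ℝ := -qinf x₀ with hεdef
  have hεpos : 0 < ε := by
    have h0 : x₀ ≠ 0 := by intro h; rw [h] at hx₀norm; simp at hx₀norm
    have := hneginf x₀ h0
    simp only [hεdef]; linarith
  set δ : ℝ := ε / (k * k + 1) with hδdef
  have hδpos : 0 < δ := by positivity
  have hkkδ : (k : ℝ) * k * δ < ε := by
    have h1 : (0:ℝ) < (k:ℝ) * k + 1 := by positivity
    calc (k : ℝ) * k * δ < ((k:ℝ) * k + 1) * δ := by nlinarith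
      _ = ε := by rw [hδdef, mul_div_cancel₀ _ (ne_of_gt h1)]
  have heve : ∀ᶠ R in atTop, ∀ i j, |c R i j - cinf i j| < δ :=
    eventually_all.2 fun i => eventually_all.2 fun j =>
      (hcconv i j).eventually (eventually_abs_sub_lt _ hδpos)
  have hkey : ∀ᶠ R in atTop, (k : ℕ∞) ≤ qIndex (QR R) := by
    filter_upwards [heve] with R hR
    have hsph : ∀ x : Fin k → ℝ, ‖x‖ = 1 → q R x < 0 := by
      intro x hx
      have hdiff : q R x - qinf x = ∑ i, ∑ j, x i * x j * (c R i j - cinf i j) := by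
        rw [quadExpand (q R) x, quadExpand qinf x, ← Finset.sum_sub_distrib]
        exact Finset.sum_congr rfl fun i _ => by
          rw [← Finset.sum_sub_distrib]
          exact Finset.sum_congr rfl fun j _ => by ring
      have habs : |q R x - qinf x| ≤ (k : ℝ) * k * δ := by
        rw [hdiff]
        calc |∑ i, ∑ j, x i * x j * (c R i j - cinf i j)|
            ≤ ∑ i, |∑ j, x i * x j * (c R i j - cinf i j)| := Finset.abs_sum_le_sum_abs _ _
          _ ≤ ∑ i : Fin k, ∑ j : Fin k, |x i * x j * (c R i j - cinf i j)| :=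
              Finset.sum_le_sum fun i _ => Finset.abs_sum_le_sum_abs _ _
          _ ≤ ∑ _i : Fin k, ∑ _j : Fin k, δ := by
              refine Finset.sum_le_sum fun i _ => Finset.sum_le_sum fun j _ => ?_
              have h1 : |x i| ≤ 1 := by
                have := norm_le_pi_norm x i
                rwa [hx, Real.norm_eq_abs] at this
              have h2 : |x j| ≤ 1 := by
                have := norm_le_pi_norm x j
                rwa [hx, Real.norm_eq_abs] at this
              have h3 : |c R i j - cinf i j| ≤ δ := le_of_lt (hR i j)
              calc |x i * x j * (c R i j - cinf i j)|
                  = |x i| * |x j| * |c R i j - cinf i j| := by rw [abs_mul, abs_mul]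
                _ ≤ 1 * 1 * δ :=
                    mul_le_mul (mul_le_mul h1 h2 (abs_nonneg _) zero_le_one) h3
                      (abs_nonneg _) (by norm_num)
                _ = δ := by ring
          _ = (k : ℝ) * k * δ := by
              simp [Finset.sum_const, Finset.card_univ]; ring
      have hmax : qinf x ≤ -ε := by
        have h8 := hx₀max (mem_sphere_zero_iff_norm.mpr hx)
        simp only [Set.mem_setOf_eq] at h8
        simp only [hεdef]; linarith
      have h7 := (abs_le.mp habs).2
      linarith
    have hnegR : ∀ x : Fin k → ℝ, x ≠ 0 → q R x < 0 := by
      intro x hx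
      have hn : ‖x‖ ≠ 0 := norm_ne_zero_iff.2 hx
      have hnpos : 0 < ‖x‖ := lt_of_le_of_ne (norm_nonneg x) (Ne.symm hn)
      have hu : ‖(‖x‖⁻¹ • x)‖ = 1 := by
        rw [norm_smul, norm_inv, norm_norm, inv_mul_cancel₀ hn]
      have hxu : x = ‖x‖ • (‖x‖⁻¹ • x) := (smul_inv_smul₀ hn x).symm
      have heq : q R x = (‖x‖ * ‖x‖) * q R (‖x‖⁻¹ • x) := by
        conv_lhs => rw [hxu]
        rw [QuadraticMap.map_smul, smul_eq_mul]
      rw [heq]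
      exact mul_neg_of_pos_of_neg (by positivity) (hsph _ hu)
    have hinjTL : Function.Injective ((T R) ∘ₗ L) := by
      refine (injective_iff_map_eq_zero _).mpr fun x h => ?_
      by_contra hx
      have h1 := hnegR x hx
      have h2 : q R x = 0 := by
        rw [hqapp, show T R (L x) = 0 from h, QuadraticMap.map_zero]
      linarith
    have hMrank : Module.finrank ℝ (LinearMap.range ((T R) ∘ₗ L)) = k := by
      rw [LinearMap.finrank_range_of_inj hinjTL, Module.finrank_fin_fun]
    have hMneg : ∀ y ∈ LinearMap.range ((T R) ∘ₗ L), y ≠ 0 → QR R y < 0 := by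
      rintro y ⟨x, rfl⟩ hy
      have hx : x ≠ 0 := by rintro rfl; simp at hy
      have := hnegR x hx
      rwa [hqapp, show T R (L x) = ((T R) ∘ₗ L) x from rfl] at this
    exact le_iSup_of_le k (le_iSup_of_le
      ⟨LinearMap.range ((T R) ∘ₗ L), inferInstance, hMrank, hMneg⟩ le_rfl)
  exact le_liminf_of_le (by isBoundedDefault) hkey
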